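/- Let K be a number field with ring of integers O_K, and let ω, η ∈ O_K with ω² − 4η squarefree and relatively prime to 2, and h = X² − ωX + η irreducible over K with root α. Then the relative discriminant of K(α) over K is the principal ideal (ω² − 4η). -/

import Mathlib

open NumberField Polynomial

set_option maxHeartbeats 1000000 in
/-- If `ω² − 4η` is squarefree and relatively prime to `2`, and `h = X² − ωX + η` is
irreducible over `K` with root `α` generating `L = K(α)`, then the relative discriminant of
`L` over `K` (the norm of the different ideal) is the principal ideal `(ω² − 4η)`. -/
theorem relative_discriminant_eq {K L : Type*} [Field K] [NumberField K]
    [Field L] [NumberField L] [Algebra K L]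
    (ω η : 𝓞 K)
    (hsq : Squarefree (Ideal.span {ω ^ 2 - 4 * η} : Ideal (𝓞 K)))
    (hcop : (Ideal.span {ω ^ 2 - 4 * η} : Ideal (𝓞 K)) ⊔ Ideal.span {(2 : 𝓞 K)} = ⊤)
    (hirr : Irreducible
      (X ^ 2 - C (algebraMap (𝓞 K) K ω) * X + C (algebraMap (𝓞 K) K η)))
    (α : L)
    (hroot : aeval α
      (X ^ 2 - C (algebraMap (𝓞 K) K ω) * X + C (algebraMap (𝓞 K) K η)) = 0)
    (hgen : IntermediateField.adjoin K {α} = ⊤) :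
    Ideal.spanNorm (𝓞 K) (differentIdeal (𝓞 K) (𝓞 L)) =
      Ideal.span {ω ^ 2 - 4 * η} := by
  classical
  set ωK := algebraMap (𝓞 K) K ω with hωK
  set ηK := algebraMap (𝓞 K) K η with hηK
  set h : K[X] := X ^ 2 - C ωK * X + C ηK with hh
  have hmonic : h.Monic := by unfold h; monicity!
  have hdeg : h.natDegree = 2 := by unfold h; compute_degree!
  have hmin : minpoly K α = h := (minpoly.eq_of_irreducible_of_monic hirr hroot hmonic).symm
  have hintα : IsIntegral K α := ⟨h, hmonic, hroot⟩
  have hAdj : Algebra.adjoin K {α} = ⊤ := by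
    rw [← IntermediateField.adjoin_simple_toSubalgebra_of_isAlgebraic hintα.isAlgebraic, hgen,
      IntermediateField.top_toSubalgebra]
  set pb : PowerBasis K L := (IntermediateField.adjoin.powerBasis hintα).map
    ((IntermediateField.equivOfEq hgen).trans IntermediateField.topEquiv) with hpb
  have hgenpb : pb.gen = α := rfl
  have hdim : pb.dim = 2 := by
    have : pb.dim = (minpoly K α).natDegree := by
      simp [hpb, IntermediateField.adjoin.powerBasis, hgenpb]
    rw [this, hmin, hdeg]
  haveI hfd : Module.Finite K L := pb.finite
  have hfinrank : Module.finrank K L = 2 := by rw [pb.finrank, hdim]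
  -- α² relation
  have hα2 : α ^ 2 = algebraMap K L ωK * α - algebraMap K L ηK := by
    have := hroot
    rw [hh] at this
    simp only [map_add, map_sub, map_mul, map_pow, aeval_X, aeval_C] at this
    linear_combination this
  -- traces
  have htr1 : ∀ c : K, Algebra.trace K L (algebraMap K L c) = 2 * c := by
    intro c
    rw [Algebra.trace_algebraMap, hfinrank]
    push_cast
    ring
  have htrα : Algebra.trace K L α = ωK := by
    have := pb.trace_gen_eq_nextCoeff_minpoly
    rw [hgenpb, hmin] at this
    rw [this, nextCoeff_of_natDegree_pos (by rw [hdeg]; norm_num), hdeg]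
    unfold h
    simp [coeff_X, coeff_C]
  have htrα2 : Algebra.trace K L (α ^ 2) = ωK ^ 2 - 2 * ηK := by
    rw [hα2, show algebraMap K L ωK * α = ωK • α from (Algebra.smul_def _ _).symm, map_sub,
      map_smul, htrα, htr1, smul_eq_mul]
    ring
  -- the integral element β
  have hinjKL : Function.Injective (algebraMap K L) := (algebraMap K L).injective
  have hinjOK : Function.Injective (algebraMap (𝓞 K) K) := IsFractionRing.injective _ _
  have hinjOL : Function.Injective (algebraMap (𝓞 L) L) := IsFractionRing.injective _ _
  set g : (𝓞 K)[X] := X ^ 2 - C ω * X + C η with hg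
  have hgmonic : g.Monic := by unfold g; monicity!
  have hgmap : g.map (algebraMap (𝓞 K) K) = h := by
    rw [hg, hh]
    simp [Polynomial.map_sub, Polynomial.map_add, Polynomial.map_pow, Polynomial.map_mul]
    rfl
  have hαintO : IsIntegral (𝓞 K) α := by
    refine ⟨g, hgmonic, ?_⟩
    rw [← aeval_def, ← aeval_map_algebraMap K, hgmap, hroot]
  have hαintZ : IsIntegral ℤ α := isIntegral_trans _ hαintO
  set β : 𝓞 L := ⟨α, hαintZ⟩ with hβdef
  have hβ : algebraMap (𝓞 L) L β = α := rfl
  have hβint : IsIntegral (𝓞 K) β := by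
    rwa [← isIntegral_algebraMap_iff hinjOL, hβ]
  have hminβ : minpoly (𝓞 K) β = g := by
    have hmapmin : (minpoly (𝓞 K) β).map (algebraMap (𝓞 K) K) = h := by
      rw [← minpoly.isIntegrallyClosed_eq_field_fractions K L hβint, hβ, hmin]
    exact Polynomial.map_injective _ hinjOK (hmapmin.trans hgmap.symm)
  -- γ = f'(β)
  set D : 𝓞 K := ω ^ 2 - 4 * η with hDdef
  set γ : 𝓞 L := 2 * β - algebraMap (𝓞 K) (𝓞 L) ω with hγdef
  have hderiv : aeval β (derivative (minpoly (𝓞 K) β)) = γ := by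
    rw [hminβ, hg]
    simp only [derivative_add, derivative_sub, derivative_X_pow, derivative_C_mul, derivative_X,
      derivative_C, mul_one, map_sub, map_add, map_mul, map_pow, aeval_X, aeval_C,
      Nat.cast_ofNat, map_ofNat, map_zero, add_zero]
    push_cast
    ring
  have hcomm : ∀ c : 𝓞 K, algebraMap (𝓞 L) L (algebraMap (𝓞 K) (𝓞 L) c)
      = algebraMap K L (algebraMap (𝓞 K) K c) := fun c => by
    rw [← IsScalarTower.algebraMap_apply, IsScalarTower.algebraMap_apply (𝓞 K) K L]
  have hγL : algebraMap (𝓞 L) L γ = 2 * α - algebraMap K L ωK := by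
    rw [hγdef, map_sub, map_mul, hβ, hcomm, ← hωK, map_ofNat]
  have hγsq : γ ^ 2 = algebraMap (𝓞 K) (𝓞 L) D := by
    apply hinjOL
    rw [map_pow, hγL, hcomm, hDdef]
    simp only [map_sub, map_mul, map_pow, map_ofNat, ← hωK, ← hηK]
    linear_combination (4 : L) * hα2
  have hD0 : D ≠ 0 := by
    intro h0
    rw [h0, Ideal.span_singleton_eq_bot.mpr rfl, ← Ideal.zero_eq_bot] at hsq
    exact not_squarefree_zero hsq
  have hDK0 : algebraMap (𝓞 K) K D ≠ 0 := fun h0 => hD0 (hinjOK (by rwa [map_zero]))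
  -- every algebraic integer lies in 𝓞K[β]
  have key : ∀ z : 𝓞 L, ∃ t : 𝓞 K,
      algebraMap (𝓞 K) K t = Algebra.trace K L (algebraMap (𝓞 L) L z) := by
    intro z
    have hz : IsIntegral (𝓞 K) (algebraMap (𝓞 L) L z) :=
      IsIntegral.tower_top (A := 𝓞 K) z.isIntegral_coe
    exact IsIntegrallyClosed.isIntegral_iff.mp (Algebra.isIntegral_trace hz)
  have hAtopO : Algebra.adjoin (𝓞 K) {β} = ⊤ := by
    rw [eq_top_iff]
    rintro x -
    obtain ⟨f, hfdeg, hfx⟩ := pb.exists_eq_aeval (algebraMap (𝓞 L) L x)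
    rw [hdim] at hfdeg
    set a := f.coeff 0 with hadef
    set b := f.coeff 1 with hbdef
    have hxab : algebraMap (𝓞 L) L x = algebraMap K L b * α + algebraMap K L a := by
      rw [hfx, eq_X_add_C_of_natDegree_le_one (by omega : f.natDegree ≤ 1)]
      simp [hgenpb]
      rfl
    -- traces of the relevant integral elements
    obtain ⟨t₀, ht₀⟩ := key x
    obtain ⟨s₀, hs₀⟩ := key (2 * (x * β) - algebraMap (𝓞 K) (𝓞 L) ω * x)
    obtain ⟨w₀, hw₀⟩ := key (x * x)
    have ht₀' : algebraMap (𝓞 K) K t₀ = 2 * a + b * ωK := by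
      rw [ht₀, hxab, map_add, show algebraMap K L b * α = b • α from (Algebra.smul_def _ _).symm,
        map_smul, htrα, htr1, smul_eq_mul]
      ring
    have hs₀' : algebraMap (𝓞 K) K s₀ = b * (ωK ^ 2 - 4 * ηK) := by
      rw [hs₀]
      have himg : algebraMap (𝓞 L) L (2 * (x * β) - algebraMap (𝓞 K) (𝓞 L) ω * x)
          = (2 * b) • (α ^ 2) + (2 * a - b * ωK) • α - (a * ωK) • (1 : L) := by
        simp only [map_sub, map_mul, map_ofNat, hβ, hcomm, hxab, ← hωK]
        simp only [Algebra.smul_def, map_sub, map_add, map_mul, map_ofNat, map_one, mul_one]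
        ring
      rw [himg, map_sub, map_add, map_smul, map_smul, map_smul, htrα2, htrα,
        show (1 : L) = algebraMap K L 1 from (map_one _).symm, htr1]
      simp only [smul_eq_mul]
      ring
    have hw₀' : algebraMap (𝓞 K) K w₀ = b ^ 2 * (ωK ^ 2 - 2 * ηK) + 2 * a * b * ωK + 2 * a ^ 2 := by
      rw [hw₀]
      have himg : algebraMap (𝓞 L) L (x * x)
          = (b ^ 2) • (α ^ 2) + (2 * a * b) • α + (a ^ 2) • (1 : L) := by
        rw [map_mul, hxab]
        simp only [Algebra.smul_def, map_add, map_mul, map_pow, map_ofNat, map_one, mul_one]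
        ring
      rw [himg, map_add, map_add, map_smul, map_smul, map_smul, htrα2, htrα,
        show (1 : L) = algebraMap K L 1 from (map_one _).symm, htr1]
      simp only [smul_eq_mul]
      ring
    -- the divisibility argument
    have hDK : algebraMap (𝓞 K) K D = ωK ^ 2 - 4 * ηK := by
      rw [hDdef]
      simp only [map_sub, map_mul, map_pow, map_ofNat, ← hωK, ← hηK]
    have hs₀sq : s₀ ^ 2 = (2 * w₀ - t₀ ^ 2) * D := by
      apply hinjOK
      simp only [map_pow, map_mul, map_sub, map_ofNat, hs₀', ht₀', hw₀', hDK]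
      ring
    have hdvd : D ∣ s₀ := by
      have h2 : Ideal.span {D} ∣ Ideal.span {s₀} ^ 2 := by
        rw [Ideal.span_singleton_pow, Ideal.dvd_iff_le, Ideal.span_singleton_le_span_singleton]
        exact ⟨2 * w₀ - t₀ ^ 2, by rw [hs₀sq]; ring⟩
      have h3 := (hsq.dvd_pow_iff_dvd two_ne_zero).mp h2
      rwa [Ideal.dvd_iff_le, Ideal.span_singleton_le_span_singleton] at h3
    obtain ⟨b₀, hb₀⟩ := hdvd
    have hbb : b = algebraMap (𝓞 K) K b₀ := by
      have : algebraMap (𝓞 K) K D * b = algebraMap (𝓞 K) K D * algebraMap (𝓞 K) K b₀ := by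
        rw [← map_mul, ← hb₀, hs₀', hDK]
        ring
      exact mul_left_cancel₀ hDK0 this
    have hyint : IsIntegral (𝓞 K) a := by
      rw [← isIntegral_algebraMap_iff hinjKL]
      have hy : algebraMap (𝓞 L) L (x - algebraMap (𝓞 K) (𝓞 L) b₀ * β) = algebraMap K L a := by
        simp only [map_sub, map_mul, hβ, hcomm, hxab, ← hbb]
        ring
      rw [← hy]
      exact IsIntegral.tower_top (A := 𝓞 K) (x - algebraMap (𝓞 K) (𝓞 L) b₀ * β).isIntegral_coe
    obtain ⟨a₀, ha₀⟩ := IsIntegrallyClosed.isIntegral_iff.mp hyint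
    have hxeq : x = algebraMap (𝓞 K) (𝓞 L) a₀ + algebraMap (𝓞 K) (𝓞 L) b₀ * β := by
      apply hinjOL
      simp only [map_add, map_mul, hβ, hcomm, hxab, ha₀, ← hbb]
      ring
    rw [hxeq]
    exact Subalgebra.add_mem _ (Subalgebra.algebraMap_mem _ _)
      (Subalgebra.mul_mem _ (Subalgebra.algebraMap_mem _ _)
        (Algebra.subset_adjoin (Set.mem_singleton β)))
  -- conductor and different ideal
  have hadjK : Algebra.adjoin K {algebraMap (𝓞 L) L β} = ⊤ := by rw [hβ]; exact hAdj
  have hcd := conductor_mul_differentIdeal (𝓞 K) K L β hadjK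
  rw [conductor_eq_top_of_adjoin_eq_top hAtopO, Ideal.top_mul, hderiv] at hcd
  -- freeness of 𝓞 L over 𝓞 K
  let pbO : PowerBasis (𝓞 K) (𝓞 L) := (Algebra.adjoin.powerBasis' hβint).map
    ((Subalgebra.equivOfEq _ _ hAtopO).trans Subalgebra.topEquiv)
  haveI : Module.Free (𝓞 K) (𝓞 L) := Module.Free.of_basis pbO.basis
  haveI : Module.Finite (𝓞 K) (𝓞 L) := Module.Finite.of_basis pbO.basis
  have hnorm : algebraMap (𝓞 K) K (Algebra.norm (𝓞 K) γ)
      = Algebra.norm K (algebraMap (𝓞 L) L γ) := by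
    rw [← Algebra.intNorm_eq_norm, Algebra.algebraMap_intNorm (L := L)]
  have hνsq : (Algebra.norm (𝓞 K) γ) ^ 2 = D ^ 2 := by
    apply hinjOK
    rw [map_pow, hnorm, ← map_pow, ← map_pow, hγsq, hcomm, Algebra.norm_algebraMap, hfinrank, map_pow]
  have : (Algebra.norm (𝓞 K) γ - D) * (Algebra.norm (𝓞 K) γ + D) = 0 := by
    linear_combination hνsq
  rw [hcd, Ideal.spanNorm_singleton, Algebra.intNorm_eq_norm]
  rcases mul_eq_zero.mp this with h0 | h0
  · rw [sub_eq_zero.mp h0]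
  · rw [show Algebra.norm (𝓞 K) γ = -D from by linear_combination h0]
    exact Ideal.span_singleton_neg D ▸ rfl
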